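/- Assume the average value h̄ of h is negative. Then the Kazdan–Warner equation Δu = c − h·e^u has a solution for every c < 0 if and only if h_i ≤ 0 for all i ∈ V and h is not identically zero. -/

import Mathlib

/-- The graph Laplacian: `(Δ f)_i = (1/μ_i) ∑_{j ∼ i} ω_{ij} (f_j - f_i)`. -/
noncomputable def glap {V : Type*} [Fintype V] (G : SimpleGraph V) [DecidableRel G.Adj]
    (μ : V → ℝ) (ω : V → V → ℝ) (f : V → ℝ) (i : V) : ℝ :=
  (1 / μ i) * ∑ j ∈ G.neighborFinset i, ω i j * (f j - f i)

set_option linter.unusedSectionVars false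

section Helpers

variable {V : Type*} [Fintype V] (G : SimpleGraph V) [DecidableRel G.Adj]
  (μ : V → ℝ) (ω : V → V → ℝ)

/-- The Laplacian as a linear map. -/
noncomputable def lapL : (V → ℝ) →ₗ[ℝ] (V → ℝ) where
  toFun f := glap G μ ω f
  map_add' f g := by
    funext i
    simp only [glap, Pi.add_apply]
    rw [← mul_add, ← Finset.sum_add_distrib]
    congr 1
    apply Finset.sum_congr rfl
    intro j _
    ring
  map_smul' a f := by
    funext i
    simp only [glap, Pi.smul_apply, smul_eq_mul, RingHom.id_apply, Finset.mul_sum]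
    exact Finset.sum_congr rfl fun j _ => by ring

@[simp] lemma lapL_apply (f : V → ℝ) (i : V) : lapL G μ ω f i = glap G μ ω f i := rfl

lemma glap_const (a : ℝ) (i : V) : glap G μ ω (fun _ => a) i = 0 := by
  simp [glap]

lemma glap_add_const (f : V → ℝ) (t : ℝ) (i : V) :
    glap G μ ω (fun j => f j + t) i = glap G μ ω f i := by
  simp [glap]

lemma sum_mu_glap (hμ : ∀ i, 0 < μ i) (hsym : ∀ i j, ω i j = ω j i) (f : V → ℝ) :
    ∑ i, μ i * glap G μ ω f i = 0 := by
  have hterm : ∀ i, μ i * glap G μ ω f i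
      = ∑ j, (if G.Adj i j then ω i j * (f j - f i) else 0) := by
    intro i
    rw [glap, ← mul_assoc, mul_one_div, div_self (ne_of_gt (hμ i)), one_mul]
    rw [SimpleGraph.neighborFinset_eq_filter, Finset.sum_filter]
  calc ∑ i, μ i * glap G μ ω f i
      = ∑ i, ∑ j, (if G.Adj i j then ω i j * (f j - f i) else 0) := by
        exact Finset.sum_congr rfl fun i _ => hterm i
    _ = 0 := by
        set F : V → V → ℝ := fun i j => if G.Adj i j then ω i j * (f j - f i) else 0 with hF
        have hanti : ∀ i j, F i j = - F j i := by
          intro i j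
          simp only [hF]
          by_cases hij : G.Adj i j
          · rw [if_pos hij, if_pos hij.symm, hsym i j]; ring
          · rw [if_neg hij, if_neg (fun hji => hij hji.symm)]; ring
        have : (∑ i, ∑ j, F i j) = - (∑ i, ∑ j, F i j) := by
          nth_rewrite 1 [Finset.sum_comm]
          calc (∑ j, ∑ i, F i j) = ∑ j, ∑ i, - F j i := by
                exact Finset.sum_congr rfl fun j _ => Finset.sum_congr rfl fun i _ => hanti i j
            _ = - (∑ j, ∑ i, F j i) := by simp [Finset.sum_neg_distrib]
        linarith
    
lemma glap_nonneg_at_min (hμ : ∀ i, 0 < μ i) (hω : ∀ i j, G.Adj i j → 0 < ω i j)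
    (f : V → ℝ) (i : V) (hmin : ∀ j, f i ≤ f j) : 0 ≤ glap G μ ω f i := by
  apply mul_nonneg (one_div_nonneg.mpr (hμ i).le)
  apply Finset.sum_nonneg
  intro j hj
  rw [SimpleGraph.mem_neighborFinset] at hj
  exact mul_nonneg (le_of_lt (hω i j hj)) (by linarith [hmin j])

lemma glap_nonpos_at_max (hμ : ∀ i, 0 < μ i) (hω : ∀ i j, G.Adj i j → 0 < ω i j)
    (f : V → ℝ) (i : V) (hmax : ∀ j, f j ≤ f i) : glap G μ ω f i ≤ 0 := by
  apply mul_nonpos_of_nonneg_of_nonpos (one_div_nonneg.mpr (hμ i).le)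
  apply Finset.sum_nonpos
  intro j hj
  rw [SimpleGraph.mem_neighborFinset] at hj
  exact mul_nonpos_of_nonneg_of_nonpos (le_of_lt (hω i j hj)) (by linarith [hmax j])

end Helpers

section LA

variable {V : Type*} [Fintype V] {G : SimpleGraph V} [DecidableRel G.Adj]
  {μ ω : _}

/-- spread a vertex property along connectivity -/
lemma spread (hconn : G.Connected) (S : Set V)
    (hcl : ∀ i ∈ S, ∀ j, G.Adj i j → j ∈ S) (i0 : V) (h0 : i0 ∈ S) : ∀ j, j ∈ S := by
  have key : ∀ {a b : V} (_ : G.Walk a b), a ∈ S → b ∈ S := by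
    intro a b w
    induction w with
    | nil => exact id
    | cons hab p ih => exact fun ha => ih (hcl _ ha _ hab)
  intro j
  obtain ⟨w⟩ := hconn.preconnected i0 j
  exact key w h0

lemma glap_zero_const (hconn : G.Connected) {μ : V → ℝ} (hμ : ∀ i, 0 < μ i)
    {ω : V → V → ℝ} (hω : ∀ i j, G.Adj i j → 0 < ω i j)
    (f : V → ℝ) (hf : ∀ i, glap G μ ω f i = 0) : ∀ i j, f i = f j := by
  have : Nonempty V := hconn.nonempty
  obtain ⟨im, _, hmax⟩ := Finset.exists_max_image Finset.univ f ⟨Classical.arbitrary V, Finset.mem_univ _⟩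
  have hmax' : ∀ j, f j ≤ f im := fun j => hmax j (Finset.mem_univ j)
  set S : Set V := {j | f j = f im} with hS
  have hcl : ∀ i ∈ S, ∀ j, G.Adj i j → j ∈ S := by
    intro i hi j hij
    have hsum : ∑ l ∈ G.neighborFinset i, ω i l * (f l - f i) = 0 := by
      have := hf i
      rw [glap] at this
      rcases mul_eq_zero.mp this with hc | hc
      · exact absurd hc (by simp [ne_of_gt (hμ i)])
      · exact hc
    have hnp : ∀ l ∈ G.neighborFinset i, ω i l * (f l - f i) ≤ 0 := by
      intro l hl
      rw [SimpleGraph.mem_neighborFinset] at hl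
      have : f l ≤ f i := by rw [hi]; exact hmax' l
      exact mul_nonpos_of_nonneg_of_nonpos (le_of_lt (hω i l hl)) (by linarith)
    have hz := (Finset.sum_eq_zero_iff_of_nonpos hnp).mp hsum j
      (by rw [SimpleGraph.mem_neighborFinset]; exact hij)
    have hωj := hω i j hij
    have : f j - f i = 0 := by
      rcases mul_eq_zero.mp hz with hc | hc
      · exact absurd hc (ne_of_gt hωj)
      · exact hc
    have hfj : f j = f i := by linarith
    show f j = f im
    rw [hfj]; exact hi
  have hall : ∀ j, j ∈ S := spread hconn S hcl im rfl
  intro i j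
  have h1 : f i = f im := hall i
  have h2 : f j = f im := hall j
  rw [h1, h2]

/-- The weighted-sum functional. -/
noncomputable def sumFun (μ : V → ℝ) : (V → ℝ) →ₗ[ℝ] ℝ where
  toFun g := ∑ i, μ i * g i
  map_add' f g := by simp [mul_add, Finset.sum_add_distrib]
  map_smul' a f := by simp [Finset.mul_sum]; exact Finset.sum_congr rfl fun i _ => by ring

lemma exists_glap_eq (hconn : G.Connected) {μ : V → ℝ} (hμ : ∀ i, 0 < μ i)
    {ω : V → V → ℝ} (hsym : ∀ i j, ω i j = ω j i) (hω : ∀ i j, G.Adj i j → 0 < ω i j)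
    (g : V → ℝ) (hg : ∑ i, μ i * g i = 0) : ∃ v : V → ℝ, ∀ i, glap G μ ω v i = g i := by
  have : Nonempty V := hconn.nonempty
  classical
  set L := lapL G μ ω with hL
  -- kernel of L is the constants
  have hker : LinearMap.ker L = Submodule.span ℝ {(fun _ => (1:ℝ) : V → ℝ)} := by
    apply le_antisymm
    · intro f hf
      rw [LinearMap.mem_ker] at hf
      have hfc : ∀ i j, f i = f j :=
        glap_zero_const hconn hμ hω f (fun i => congrFun hf i)
      have : f = f (Classical.arbitrary V) • (fun _ => (1:ℝ)) := by
        funext j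
        simp [hfc j (Classical.arbitrary V)]
      rw [this]
      exact Submodule.smul_mem _ _ (Submodule.mem_span_singleton_self _)
    · rw [Submodule.span_le, Set.singleton_subset_iff]
      rw [SetLike.mem_coe, LinearMap.mem_ker]
      funext i
      show glap G μ ω (fun _ => (1:ℝ)) i = 0
      exact glap_const G μ ω 1 i
  have hone : (fun _ => (1:ℝ) : V → ℝ) ≠ 0 := by
    intro hc
    have := congrFun hc (Classical.arbitrary V)
    simp at this
  have hkrank : Module.finrank ℝ (LinearMap.ker L) = 1 := by
    rw [hker, finrank_span_singleton hone]
  have hdim : Module.finrank ℝ (V → ℝ) = Fintype.card V := by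
    simp [Module.finrank_pi]
  have hrn := LinearMap.finrank_range_add_finrank_ker L
  rw [hkrank, hdim] at hrn
  -- the mean-zero subspace
  set Z := LinearMap.ker (sumFun μ : (V → ℝ) →ₗ[ℝ] ℝ) with hZ
  have hsurj : Function.Surjective (sumFun μ : (V → ℝ) →ₗ[ℝ] ℝ) := by
    intro r
    have hv : (0:ℝ) < ∑ i, μ i := Finset.sum_pos (fun i _ => hμ i) Finset.univ_nonempty
    refine ⟨fun _ => r / (∑ i, μ i), ?_⟩
    show ∑ i, μ i * (r / (∑ i, μ i)) = r
    rw [← Finset.sum_mul]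
    field_simp
  have hZrank : Module.finrank ℝ Z + 1 = Fintype.card V := by
    have := LinearMap.finrank_range_add_finrank_ker (sumFun μ : (V → ℝ) →ₗ[ℝ] ℝ)
    rw [hdim] at this
    rw [LinearMap.range_eq_top.mpr hsurj] at this
    simp [Module.finrank_self] at this
    rw [hZ]
    omega
  have hle : LinearMap.range L ≤ Z := by
    rintro x ⟨f, rfl⟩
    rw [hZ, LinearMap.mem_ker]
    show ∑ i, μ i * (L f) i = 0
    exact sum_mu_glap G μ ω hμ hsym f
  have heq : LinearMap.range L = Z := by
    apply Submodule.eq_of_le_of_finrank_le hle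
    omega
  have hgZ : g ∈ Z := by rw [hZ, LinearMap.mem_ker]; exact hg
  rw [← heq] at hgZ
  obtain ⟨v, hv⟩ := hgZ
  exact ⟨v, fun i => congrFun hv i⟩

/-- the operator `f ↦ Δf - k f` -/
noncomputable def resA (G : SimpleGraph V) [DecidableRel G.Adj] (μ : V → ℝ) (ω : V → V → ℝ)
    (k : ℝ) : (V → ℝ) →ₗ[ℝ] (V → ℝ) :=
  lapL G μ ω - k • LinearMap.id

lemma resA_apply (k : ℝ) (f : V → ℝ) (i : V) :
    resA G μ ω k f i = glap G μ ω f i - k * f i := by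
  simp [resA]

lemma maxprin (hconn : G.Connected) {μ : V → ℝ} (hμ : ∀ i, 0 < μ i)
    {ω : V → V → ℝ} (hω : ∀ i j, G.Adj i j → 0 < ω i j) {k : ℝ} (hk : 0 < k)
    (φ : V → ℝ) (hφ : ∀ i, glap G μ ω φ i - k * φ i ≤ 0) : ∀ i, 0 ≤ φ i := by
  have : Nonempty V := hconn.nonempty
  obtain ⟨im, _, hmin⟩ := Finset.exists_min_image Finset.univ φ ⟨Classical.arbitrary V, Finset.mem_univ _⟩
  have hmin' : ∀ j, φ im ≤ φ j := fun j => hmin j (Finset.mem_univ j)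
  have h1 : 0 ≤ glap G μ ω φ im := glap_nonneg_at_min G μ ω hμ hω φ im hmin'
  have h2 := hφ im
  have h3 : 0 ≤ φ im := by nlinarith
  intro i; linarith [hmin' i]

lemma resA_bijective (hconn : G.Connected) {μ : V → ℝ} (hμ : ∀ i, 0 < μ i)
    {ω : V → V → ℝ} (hω : ∀ i j, G.Adj i j → 0 < ω i j) {k : ℝ} (hk : 0 < k) :
    Function.Bijective (resA G μ ω k) := by
  have : Nonempty V := hconn.nonempty
  have hinj : Function.Injective (resA G μ ω k) := by
    rw [← LinearMap.ker_eq_bot]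
    rw [Submodule.eq_bot_iff]
    intro f hf
    rw [LinearMap.mem_ker] at hf
    have hf' : ∀ i, glap G μ ω f i - k * f i = 0 := by
      intro i
      have := congrFun hf i
      rwa [resA_apply] at this
    have hge : ∀ i, 0 ≤ f i := maxprin hconn hμ hω hk f (fun i => le_of_eq (hf' i))
    have hle : ∀ i, f i ≤ 0 := by
      have := maxprin hconn hμ hω hk (fun i => - f i) ?_
      · intro i; linarith [this i]
      · intro i
        have h2 : glap G μ ω ((-1:ℝ) • f) i = - glap G μ ω f i := by
          have := congrFun (map_smul (lapL G μ ω) (-1:ℝ) f) i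
          simpa using this
        have h3 : (fun j => - f j) = ((-1:ℝ) • f) := by funext j; simp
        rw [h3, h2]
        simp only [Pi.smul_apply, smul_eq_mul, neg_one_mul, mul_neg]
        linarith [hf' i]
    funext i
    exact le_antisymm (hle i) (hge i)
  exact ⟨hinj, (LinearMap.injective_iff_surjective).mp hinj⟩

lemma forward_dir (hconn : G.Connected) {μ : V → ℝ} (hμ : ∀ i, 0 < μ i)
    {ω : V → V → ℝ} (hω : ∀ i j, G.Adj i j → 0 < ω i j) (h : V → ℝ)
    (havg : (∑ i, μ i * h i) / (∑ i, μ i) < 0)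
    (hsol : ∀ c < (0 : ℝ), ∃ u : V → ℝ, ∀ i, glap G μ ω u i = c - h i * Real.exp (u i)) :
    (∀ i, h i ≤ 0) ∧ h ≠ 0 := by
  have : Nonempty V := hconn.nonempty
  constructor
  · by_contra hc
    push_neg at hc
    obtain ⟨i0, hi0⟩ := hc
    set H : ℝ := ∑ i, |h i| with hH
    have hHb : ∀ i, |h i| ≤ H := by
      intro i
      exact Finset.single_le_sum (fun j _ => abs_nonneg (h j)) (Finset.mem_univ i)
    have hHpos : 0 < H := lt_of_lt_of_le hi0 ((le_abs_self _).trans (hHb i0))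
    set W : ℝ := ∑ j ∈ G.neighborFinset i0, ω i0 j with hW
    have hWnn : 0 ≤ W := Finset.sum_nonneg fun j hj =>
      le_of_lt (hω i0 j ((SimpleGraph.mem_neighborFinset G i0 j).mp hj))
    set c : ℝ := -(1 + W * H / (μ i0 * h i0)) with hc
    have hcneg : c < 0 := by
      have : 0 ≤ W * H / (μ i0 * h i0) :=
        div_nonneg (mul_nonneg hWnn hHpos.le) (mul_pos (hμ i0) hi0).le
      rw [hc]; linarith
    obtain ⟨u, hu⟩ := hsol c hcneg
    obtain ⟨im, _, hmin⟩ := Finset.exists_min_image Finset.univ u ⟨i0, Finset.mem_univ _⟩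
    have hmin' : ∀ j, u im ≤ u j := fun j => hmin j (Finset.mem_univ j)
    have h1 : 0 ≤ glap G μ ω u im := glap_nonneg_at_min G μ ω hμ hω u im hmin'
    have h2 : h im * Real.exp (u im) ≤ c := by
      have := hu im; linarith
    have hexpmin : (-c) / H ≤ Real.exp (u im) := by
      have hneg : h im < 0 := by
        by_contra hcon
        push_neg at hcon
        nlinarith [Real.exp_pos (u im)]
      have habs : -h im ≤ H := (neg_le_abs _).trans (hHb im)
      have : (-c) ≤ H * Real.exp (u im) := by nlinarith [Real.exp_pos (u im)]
      rw [div_le_iff₀ hHpos] at *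
      linarith
    have hcc : (0:ℝ) < -c := by linarith
    have hbound : ∀ j, Real.exp (-(u j)) ≤ H / (-c) := by
      intro j
      have h6 : (-c)/H ≤ Real.exp (u j) := le_trans hexpmin (Real.exp_le_exp.mpr (hmin' j))
      have h7 : (0:ℝ) < (-c)/H := div_pos hcc hHpos
      rw [Real.exp_neg]
      calc (Real.exp (u j))⁻¹ ≤ ((-c)/H)⁻¹ := by
            apply inv_anti₀ h7 h6
        _ = H/(-c) := by rw [inv_div]
    -- main chain at i0
    have hμ0 : 0 < μ i0 := hμ i0
    have key : h i0 ≤ (1 / μ i0) * (W * (H / (-c))) := by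
      have e0 : Real.exp (-(u i0)) > 0 := Real.exp_pos _
      have step1 : h i0 ≤ Real.exp (-(u i0)) * (h i0 * Real.exp (u i0) - c) := by
        have he : Real.exp (-(u i0)) * (h i0 * Real.exp (u i0)) = h i0 := by
          rw [Real.exp_neg]
          field_simp
        nlinarith
      have step2 : Real.exp (-(u i0)) * (h i0 * Real.exp (u i0) - c)
          = (1 / μ i0) * ∑ j ∈ G.neighborFinset i0, ω i0 j * ((u i0 - u j) * Real.exp (-(u i0))) := by
        have heq : h i0 * Real.exp (u i0) - c = - glap G μ ω u i0 := by
          have := hu i0; linarith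
        rw [heq, glap]
        have hrw : ∀ S : ℝ, Real.exp (-(u i0)) * -(1 / μ i0 * S)
            = 1 / μ i0 * (-(Real.exp (-(u i0))) * S) := fun S => by ring
        rw [hrw]
        congr 1
        rw [Finset.mul_sum]
        exact Finset.sum_congr rfl fun j _ => by ring
      have step3 : ∀ j ∈ G.neighborFinset i0,
          ω i0 j * ((u i0 - u j) * Real.exp (-(u i0))) ≤ ω i0 j * (H / (-c)) := by
        intro j hj
        have hωj : 0 < ω i0 j := hω i0 j ((SimpleGraph.mem_neighborFinset G i0 j).mp hj)
        apply mul_le_mul_of_nonneg_left _ (le_of_lt hωj)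
        -- (u i0 - u j) * e^{-u i0} ≤ e^{-u j} - e^{-u i0} ≤ e^{-u j} ≤ H/(-c)
        have hconv : (u i0 - u j) * Real.exp (-(u i0)) ≤ Real.exp (-(u j)) - Real.exp (-(u i0)) := by
          have h4 : (u i0 - u j) + 1 ≤ Real.exp (u i0 - u j) := Real.add_one_le_exp _
          have h5 : Real.exp (-(u i0)) * Real.exp (u i0 - u j) = Real.exp (-(u j)) := by
            rw [← Real.exp_add]; ring_nf
          nlinarith [Real.exp_pos (-(u i0))]
        have := hbound j
        nlinarith [Real.exp_pos (-(u i0))]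
      calc h i0 ≤ Real.exp (-(u i0)) * (h i0 * Real.exp (u i0) - c) := step1
        _ = (1 / μ i0) * ∑ j ∈ G.neighborFinset i0, ω i0 j * ((u i0 - u j) * Real.exp (-(u i0))) := step2
        _ ≤ (1 / μ i0) * ∑ j ∈ G.neighborFinset i0, ω i0 j * (H / (-c)) := by
            apply mul_le_mul_of_nonneg_left (Finset.sum_le_sum step3) (by positivity)
        _ = (1 / μ i0) * (W * (H / (-c))) := by rw [hW, Finset.sum_mul]
    -- derive contradiction
    have hncc : -c = 1 + W * H / (μ i0 * h i0) := by rw [hc]; ring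
    have e1 : h i0 * μ i0 * (-c) = h i0 * μ i0 + W * H := by
      rw [hncc]
      field_simp
    have e2 : h i0 * μ i0 * (-c) ≤ W * H := by
      have hkey2 := mul_le_mul_of_nonneg_right key (mul_pos hμ0 hcc).le
      have e3 : (1 / μ i0) * (W * (H / (-c))) * (μ i0 * -c) = W * H := by
        field_simp
        rw [mul_div_assoc, div_self (ne_of_lt hcneg), mul_one]
      calc h i0 * μ i0 * (-c) = h i0 * (μ i0 * -c) := by ring
        _ ≤ (1 / μ i0) * (W * (H / (-c))) * (μ i0 * -c) := hkey2
        _ = W * H := e3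
    nlinarith [mul_pos hi0 hμ0]
  · intro hzero
    rw [hzero] at havg
    simp at havg

lemma glap_sub (f g : V → ℝ) (i : V) :
    glap G μ ω (fun j => f j - g j) i = glap G μ ω f i - glap G μ ω g i := by
  simp only [glap]
  rw [← mul_sub, ← Finset.sum_sub_distrib]
  congr 1
  exact Finset.sum_congr rfl fun j _ => by ring

set_option maxHeartbeats 2000000 in
lemma backward_dir (hconn : G.Connected) {μ : V → ℝ} (hμ : ∀ i, 0 < μ i)
    {ω : V → V → ℝ} (hsym : ∀ i j, ω i j = ω j i) (hω : ∀ i j, G.Adj i j → 0 < ω i j)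
    (h : V → ℝ) (havg : (∑ i, μ i * h i) / (∑ i, μ i) < 0) (hle : ∀ i, h i ≤ 0) :
    ∀ c < (0 : ℝ), ∃ u : V → ℝ, ∀ i, glap G μ ω u i = c - h i * Real.exp (u i) := by
  have : Nonempty V := hconn.nonempty
  intro c hc
  have hVol : (0:ℝ) < ∑ i, μ i := Finset.sum_pos (fun i _ => hμ i) Finset.univ_nonempty
  have hsumh : ∑ i, μ i * h i < 0 := by
    by_contra hcon
    push_neg at hcon
    have := div_nonneg hcon hVol.le
    linarith
  set hbar : ℝ := (∑ i, μ i * h i) / (∑ i, μ i) with hhbar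
  have hbarneg : hbar < 0 := havg
  set K : ℝ := c / hbar with hKdef
  have hK : 0 < K := div_pos_of_neg_of_neg hc hbarneg
  have hKh : K * hbar = c := div_mul_cancel₀ c (ne_of_lt hbarneg)
  set g : V → ℝ := fun i => K * (hbar - h i) with hg
  have hgsum : ∑ i, μ i * g i = 0 := by
    have e1 : ∑ i, μ i * g i = K * ((∑ i, μ i) * hbar - ∑ i, μ i * h i) := by
      rw [hg]
      calc ∑ i, μ i * (K * (hbar - h i))
          = ∑ i, (K * (μ i * hbar) - K * (μ i * h i)) :=
            Finset.sum_congr rfl fun i _ => by ring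
        _ = K * (∑ i, μ i * hbar) - K * (∑ i, μ i * h i) := by
            rw [Finset.sum_sub_distrib, ← Finset.mul_sum, ← Finset.mul_sum]
        _ = K * ((∑ i, μ i) * hbar - ∑ i, μ i * h i) := by
            rw [← Finset.sum_mul]; ring
    have e2 : (∑ i, μ i) * hbar = ∑ i, μ i * h i := by
      rw [hhbar, mul_comm, div_mul_cancel₀ _ (ne_of_gt hVol)]
    rw [e1, e2, sub_self, mul_zero]
  obtain ⟨v, hv⟩ := exists_glap_eq hconn hμ hsym hω g hgsum
  -- supersolution up := v + t
  obtain ⟨vm, _, hvm⟩ := Finset.exists_min_image Finset.univ v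
    ⟨Classical.arbitrary V, Finset.mem_univ _⟩
  set t : ℝ := Real.log K - v vm with ht
  set up : V → ℝ := fun i => v i + t with hup
  have hupK : ∀ i, K ≤ Real.exp (up i) := by
    intro i
    have h1 : Real.log K ≤ up i := by
      have := hvm i (Finset.mem_univ i)
      rw [hup, ht]; simp; linarith
    calc K = Real.exp (Real.log K) := (Real.exp_log hK).symm
      _ ≤ Real.exp (up i) := Real.exp_le_exp.mpr h1
  have hglapup : ∀ i, glap G μ ω up i = g i := by
    intro i
    rw [hup, glap_add_const]
    exact hv i
  have hsuper : ∀ i, glap G μ ω up i ≤ c - h i * Real.exp (up i) := by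
    intro i
    rw [hglapup i, hg]
    show K * (hbar - h i) ≤ c - h i * Real.exp (up i)
    have h2 : h i * Real.exp (up i) ≤ h i * K :=
      mul_le_mul_of_nonpos_left (hupK i) (hle i)
    nlinarith [hKh]
  -- subsolution low := const s
  have hexneg : ∃ i, h i < 0 := by
    by_contra hcon
    push_neg at hcon
    have : (0:ℝ) ≤ ∑ i, μ i * h i :=
      Finset.sum_nonneg fun i _ => mul_nonneg (hμ i).le (hcon i)
    linarith
  obtain ⟨i1, hi1⟩ := hexneg
  obtain ⟨ihm, _, hihm⟩ := Finset.exists_min_image Finset.univ h ⟨i1, Finset.mem_univ _⟩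
  set β : ℝ := - h ihm with hβ
  have hβpos : 0 < β := by
    have := hihm i1 (Finset.mem_univ i1)
    rw [hβ]; linarith
  obtain ⟨um, _, hum⟩ := Finset.exists_min_image Finset.univ up
    ⟨Classical.arbitrary V, Finset.mem_univ _⟩
  set s : ℝ := min (Real.log ((-c)/β)) (up um) with hs
  set low : V → ℝ := fun _ => s with hlow
  have hlowup : ∀ i, low i ≤ up i :=
    fun i => le_trans (min_le_right _ _) (hum i (Finset.mem_univ i))
  have hes : Real.exp s ≤ (-c)/β := by
    calc Real.exp s ≤ Real.exp (Real.log ((-c)/β)) :=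
          Real.exp_le_exp.mpr (min_le_left _ _)
      _ = (-c)/β := Real.exp_log (div_pos (neg_pos.mpr hc) hβpos)
  have hsub : ∀ i, c - h i * Real.exp s ≤ 0 := by
    intro i
    have h8 : -β ≤ h i := by
      have := hihm i (Finset.mem_univ i)
      rw [hβ]; linarith
    have h9 : -β * Real.exp s ≤ h i * Real.exp s :=
      mul_le_mul_of_nonneg_right h8 (Real.exp_pos s).le
    have h10 : β * Real.exp s ≤ -c := by
      have h10a := mul_le_mul_of_nonneg_left hes hβpos.le
      have h10b : β * ((-c)/β) = -c := by
        rw [mul_comm]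
        exact div_mul_cancel₀ (-c) (ne_of_gt hβpos)
      calc β * Real.exp s ≤ β * ((-c)/β) := h10a
        _ = -c := h10b
    calc c - h i * Real.exp s ≤ c + β * Real.exp s := by linarith [h9]
      _ ≤ 0 := by linarith [h10]
  -- the constant k
  obtain ⟨iM, _, hiM⟩ := Finset.exists_max_image Finset.univ up
    ⟨Classical.arbitrary V, Finset.mem_univ _⟩
  set M : ℝ := up iM with hM
  have hupM : ∀ i, up i ≤ M := fun i => hiM i (Finset.mem_univ i)
  set Hs : ℝ := ∑ i, |h i| with hHs
  have hHsb : ∀ i, |h i| ≤ Hs :=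
    fun i => Finset.single_le_sum (fun j _ => abs_nonneg (h j)) (Finset.mem_univ i)
  have hHsnn : 0 ≤ Hs := Finset.sum_nonneg fun i _ => abs_nonneg (h i)
  set k : ℝ := 1 + Hs * Real.exp M with hk
  have hkpos : 0 < k := by
    have : 0 ≤ Hs * Real.exp M := mul_nonneg hHsnn (Real.exp_pos M).le
    rw [hk]; linarith
  -- monotonicity of x ↦ c - h i e^x - k x on (-∞, M]
  have hmono : ∀ i, ∀ x y : ℝ, x ≤ y → y ≤ M →
      c - h i * Real.exp y - k * y ≤ c - h i * Real.exp x - k * x := by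
    intro i x y hxy hyM
    have h11 : Real.exp y * (1 + x - y) ≤ Real.exp x := by
      have hxy1 := Real.add_one_le_exp (x - y)
      calc Real.exp y * (1 + x - y) = Real.exp y * ((x-y)+1) := by ring
        _ ≤ Real.exp y * Real.exp (x - y) :=
            mul_le_mul_of_nonneg_left hxy1 (Real.exp_pos y).le
        _ = Real.exp x := by rw [← Real.exp_add]; ring_nf
    have h12 : Real.exp y - Real.exp x ≤ Real.exp M * (y - x) := by
      have hyM' : Real.exp y ≤ Real.exp M := Real.exp_le_exp.mpr hyM
      nlinarith [Real.exp_pos y, sub_nonneg.mpr hxy]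
    have h13 : (- h i) ≤ Hs := le_trans (neg_le_abs _) (hHsb i)
    have hnn : 0 ≤ -h i := neg_nonneg.mpr (hle i)
    have hd : 0 ≤ Real.exp y - Real.exp x := by
      have := Real.exp_le_exp.mpr hxy; linarith
    have h14 : (-h i) * (Real.exp y - Real.exp x) ≤ Hs * (Real.exp M * (y-x)) :=
      calc (-h i) * (Real.exp y - Real.exp x)
          ≤ Hs * (Real.exp y - Real.exp x) := mul_le_mul_of_nonneg_right h13 hd
        _ ≤ Hs * (Real.exp M * (y-x)) := mul_le_mul_of_nonneg_left h12 hHsnn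
    have h15 : Hs * (Real.exp M * (y - x)) = (k - 1) * (y - x) := by rw [hk]; ring
    have h16 : (k - 1) * (y - x) ≤ k * (y - x) := by nlinarith [hxy]
    nlinarith [h14, h15, h16]
  -- the iteration
  have hAbij := resA_bijective hconn hμ hω hkpos (ω := ω) (μ := μ)
  obtain ⟨Einv, hEinv⟩ : ∃ Einv : (V → ℝ) → (V → ℝ),
      ∀ z, resA G μ ω k (Einv z) = z :=
    ⟨fun z => (hAbij.surjective z).choose, fun z => (hAbij.surjective z).choose_spec⟩
  obtain ⟨useq, huseq0, huseqS⟩ : ∃ useq : ℕ → V → ℝ, useq 0 = up ∧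
      ∀ n, useq (n+1) = Einv (fun i => c - h i * Real.exp (useq n i) - k * useq n i) := by
    refine ⟨fun n => (fun w => Einv (fun i => c - h i * Real.exp (w i) - k * w i))^[n] up,
      ?_, ?_⟩
    · simp only [Function.iterate_zero_apply]
    · intro n
      simp only [Function.iterate_succ_apply']
  have hA : ∀ n i, glap G μ ω (useq (n+1)) i - k * useq (n+1) i
      = c - h i * Real.exp (useq n i) - k * useq n i := by
    intro n i
    have h17 : resA G μ ω k (useq (n+1))
        = (fun i => c - h i * Real.exp (useq n i) - k * useq n i) := by
      rw [huseqS n]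
      exact hEinv _
    have := congrFun h17 i
    rwa [resA_apply] at this
  have hinv : ∀ n, (∀ i, low i ≤ useq n i) ∧ (∀ i, useq n i ≤ up i)
      ∧ (∀ i, useq (n+1) i ≤ useq n i) := by
    intro n
    induction n with
    | zero =>
      refine ⟨?_, fun i => le_of_eq (congrFun huseq0 i), ?_⟩
      · intro i
        rw [huseq0]
        exact hlowup i
      have hφ : ∀ i, glap G μ ω (fun j => useq 0 j - useq 1 j) i
          - k * (useq 0 i - useq 1 i) ≤ 0 := by
        intro i
        rw [glap_sub]
        have h19 := hA 0 i
        rw [huseq0] at h19 ⊢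
        have h20 := hsuper i
        nlinarith [h19, h20]
      intro i
      have := maxprin hconn hμ hω hkpos _ hφ i
      linarith
    | succ n ih =>
      obtain ⟨ihlow, ihup, ihdec⟩ := ih
      have hupn1 : ∀ i, useq (n+1) i ≤ up i := fun i => le_trans (ihdec i) (ihup i)
      have hlown1 : ∀ i, low i ≤ useq (n+1) i := by
        have hφ : ∀ i, glap G μ ω (fun j => useq (n+1) j - low j) i
            - k * (useq (n+1) i - low i) ≤ 0 := by
          intro i
          rw [glap_sub]
          have h19 := hA n i
          have h24 : glap G μ ω low i = 0 := glap_const G μ ω s i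
          have h25 : c - h i * Real.exp (useq n i) - k * useq n i
              ≤ c - h i * Real.exp s - k * s :=
            hmono i s (useq n i) (ihlow i) (le_trans (ihup i) (hupM i))
          have h26 := hsub i
          have h27 : low i = s := rfl
          nlinarith [h19, h24, h25, h26]
        intro i
        have := maxprin hconn hμ hω hkpos _ hφ i
        linarith
      refine ⟨hlown1, hupn1, ?_⟩
      have hφ : ∀ i, glap G μ ω (fun j => useq (n+1) j - useq (n+2) j) i
          - k * (useq (n+1) i - useq (n+2) i) ≤ 0 := by
        intro i
        rw [glap_sub]
        have h19 := hA n i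
        have h28 := hA (n+1) i
        have h25 : c - h i * Real.exp (useq n i) - k * useq n i
            ≤ c - h i * Real.exp (useq (n+1) i) - k * useq (n+1) i :=
          hmono i (useq (n+1) i) (useq n i) (ihdec i) (le_trans (ihup i) (hupM i))
        nlinarith [h19, h28, h25]
      intro i
      have := maxprin hconn hμ hω hkpos _ hφ i
      linarith
  -- pass to the limit
  have hanti : ∀ i, Antitone (fun n => useq n i) :=
    fun i => antitone_nat_of_succ_le (fun n => (hinv n).2.2 i)
  have hbdd : ∀ i, BddBelow (Set.range fun n => useq n i) := by
    intro i
    refine ⟨s, ?_⟩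
    rintro x ⟨n, rfl⟩
    exact (hinv n).1 i
  set L : V → ℝ := fun i => ⨅ n, useq n i with hLdef
  have hLim : ∀ i, Filter.Tendsto (fun n => useq n i) Filter.atTop (nhds (L i)) :=
    fun i => tendsto_atTop_ciInf (hanti i) (hbdd i)
  have hLim' : ∀ i, Filter.Tendsto (fun n => useq (n+1) i) Filter.atTop (nhds (L i)) :=
    fun i => (hLim i).comp (Filter.tendsto_add_atTop_nat 1)
  refine ⟨L, fun i => ?_⟩
  have t1 : Filter.Tendsto (fun n => glap G μ ω (useq (n+1)) i - k * useq (n+1) i)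
      Filter.atTop (nhds (glap G μ ω L i - k * L i)) := by
    have hshape : (fun n => glap G μ ω (useq (n+1)) i - k * useq (n+1) i)
        = (fun n => (1 / μ i) * ∑ j ∈ G.neighborFinset i,
            ω i j * (useq (n+1) j - useq (n+1) i) - k * useq (n+1) i) := rfl
    have hshape2 : glap G μ ω L i - k * L i
        = (1 / μ i) * ∑ j ∈ G.neighborFinset i, ω i j * (L j - L i) - k * L i := rfl
    rw [hshape, hshape2]
    apply Filter.Tendsto.sub
    · apply Filter.Tendsto.const_mul
      apply tendsto_finset_sum
      intro j _
      exact ((hLim' j).sub (hLim' i)).const_mul (ω i j)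
    · exact (hLim' i).const_mul k
  have t2 : Filter.Tendsto (fun n => glap G μ ω (useq (n+1)) i - k * useq (n+1) i)
      Filter.atTop (nhds (c - h i * Real.exp (L i) - k * L i)) := by
    have hshape : (fun n => glap G μ ω (useq (n+1)) i - k * useq (n+1) i)
        = fun n => c - h i * Real.exp (useq n i) - k * useq n i := funext fun n => hA n i
    rw [hshape]
    have texp : Filter.Tendsto (fun n => Real.exp (useq n i)) Filter.atTop
        (nhds (Real.exp (L i))) := (Real.continuous_exp.tendsto (L i)).comp (hLim i)
    exact (tendsto_const_nhds.sub (texp.const_mul (h i))).sub ((hLim i).const_mul k)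
  have hfin := tendsto_nhds_unique t1 t2
  linarith [hfin]

end LA


/-- Assume the average `h̄ = (∑ μ_i h_i) / (∑ μ_i)` is negative. Then the Kazdan–Warner
equation `Δ u = c - h e^u` is solvable for every `c < 0` iff `h ≤ 0` and `h ≢ 0`. -/
theorem stmt_6 {V : Type*} [Fintype V] (G : SimpleGraph V) [DecidableRel G.Adj]
    (hconn : G.Connected)
    (μ : V → ℝ) (hμ : ∀ i, 0 < μ i)
    (ω : V → V → ℝ) (hsym : ∀ i j, ω i j = ω j i)
    (hω : ∀ i j, G.Adj i j → 0 < ω i j)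
    (h : V → ℝ)
    (havg : (∑ i, μ i * h i) / (∑ i, μ i) < 0) :
    (∀ c < (0 : ℝ), ∃ u : V → ℝ, ∀ i, glap G μ ω u i = c - h i * Real.exp (u i)) ↔
      ((∀ i, h i ≤ 0) ∧ h ≠ 0) := by
  constructor
  · intro hsol
    exact forward_dir hconn hμ hω h havg hsol
  · rintro ⟨hle, -⟩
    exact backward_dir hconn hμ hsym hω h havg hle
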